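/- Let κ be a regular uncountable cardinal and let U be a uniform ultrafilter on κ. If U has an almost-decreasing generating sequence, then U has an almost-decreasing generating sequence ⟨A_i : i < θ⟩ whose length θ is a regular cardinal with θ > κ. -/

import Mathlib

universe u

open Cardinal Set

/-- `A ⊆* B` below the cardinal `κ`: the difference `A \ B` is bounded below `κ`
(where `κ` is identified with its set of ordinals `Set.Iio κ.ord`). -/
def AlmostSub (κ : Cardinal.{u}) (A B : Set Ordinal.{u}) : Prop :=
  ∃ β, β < κ.ord ∧ A \ B ⊆ Set.Iio β

/-- An ultrafilter on the cardinal `κ`, identified with its set of ordinals `Set.Iio κ.ord`. -/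
structure UltrafilterOn (κ : Cardinal.{u}) : Type (u + 1) where
  sets : Set (Set Ordinal.{u})
  sets_subset : ∀ A ∈ sets, A ⊆ Set.Iio κ.ord
  univ_mem : Set.Iio κ.ord ∈ sets
  superset_mem : ∀ A ∈ sets, ∀ B, B ⊆ Set.Iio κ.ord → A ⊆ B → B ∈ sets
  inter_mem : ∀ A ∈ sets, ∀ B ∈ sets, A ∩ B ∈ sets
  empty_not_mem : ∅ ∉ sets
  mem_or_compl_mem : ∀ A, A ⊆ Set.Iio κ.ord → A ∈ sets ∨ Set.Iio κ.ord \ A ∈ sets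

namespace UltrafilterOn

variable {κ : Cardinal.{u}}

/-- A uniform ultrafilter: every member has cardinality `κ`. -/
def IsUniform (U : UltrafilterOn κ) : Prop :=
  ∀ A ∈ U.sets, #A = Cardinal.lift.{u + 1, u} κ

/-- `κ`-completeness: `U` is closed under intersections of fewer than `κ` many of its members. -/
def IsComplete (U : UltrafilterOn κ) : Prop :=
  ∀ S : Set (Set Ordinal.{u}), S.Nonempty → S ⊆ U.sets →
    #S < Cardinal.lift.{u + 1, u} κ → ⋂₀ S ∈ U.sets

/-- Nonprincipal: no singleton is a member. -/
def IsNonprincipal (U : UltrafilterOn κ) : Prop :=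
  ∀ β : Ordinal.{u}, {β} ∉ U.sets

/-- A base for `U`: a subfamily `B ⊆ U` such that every member of `U` almost contains
a member of `B`. -/
def IsBase (U : UltrafilterOn κ) (B : Set (Set Ordinal.{u})) : Prop :=
  B ⊆ U.sets ∧ ∀ X ∈ U.sets, ∃ Y ∈ B, AlmostSub κ Y X

/-- The character of `U`: the least cardinality of a base for `U`. -/
noncomputable def char (U : UltrafilterOn κ) : Cardinal.{u + 1} :=
  sInf {c | ∃ B, U.IsBase B ∧ #B = c}

/-- `⟨A i : i < θord⟩` is an almost-decreasing generating sequence for `U`: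
its entries are members of `U`, it is `⊆*`-decreasing, and its range is a base for `U`. -/
def IsADGenSeq (U : UltrafilterOn κ) (θord : Ordinal.{u})
    (A : Ordinal.{u} → Set Ordinal.{u}) : Prop :=
  (∀ i, i < θord → A i ∈ U.sets) ∧
  (∀ i j, i ≤ j → j < θord → AlmostSub κ (A j) (A i)) ∧
  U.IsBase (A '' Set.Iio θord)

/-- A normal measure on `κ`: a `κ`-complete nonprincipal ultrafilter such that every
function regressive on a member of `U` is constant on a member of `U`. -/
def IsNormalMeasure (U : UltrafilterOn κ) : Prop :=
  U.IsComplete ∧ U.IsNonprincipal ∧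
  ∀ f : Ordinal.{u} → Ordinal.{u},
    (∃ X ∈ U.sets, ∀ α ∈ X, f α < α) → ∃ Y ∈ U.sets, ∃ c, ∀ α ∈ Y, f α = c

end UltrafilterOn

/-- `κ` is a measurable cardinal: it is uncountable and carries a `κ`-complete
nonprincipal ultrafilter. -/
def IsMeasurableCard (κ : Cardinal.{u}) : Prop :=
  ℵ₀ < κ ∧ ∃ U : UltrafilterOn κ, U.IsComplete ∧ U.IsNonprincipal

/-- `f <* g`: eventual (pointwise) domination below `ρord`. -/
def EvDomLt (ρord : Ordinal.{u}) (f g : Ordinal.{u} → Ordinal.{u}) : Prop :=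
  ∃ i₀, i₀ < ρord ∧ ∀ i, i₀ ≤ i → i < ρord → f i < g i

/-- Membership in the product `∏_{i < ρord} lam i` (of cardinals `lam i`). -/
def InProd (ρord : Ordinal.{u}) (lam : Ordinal.{u} → Cardinal.{u})
    (f : Ordinal.{u} → Ordinal.{u}) : Prop :=
  ∀ i, i < ρord → f i < (lam i).ord

/-- `⟨g η : η < ν⟩` is a scale of length `ν` in `∏_{i < ρord} lam i`:
a `<*`-increasing and `<*`-cofinal sequence in the product. -/
def IsScale (ρord : Ordinal.{u}) (lam : Ordinal.{u} → Cardinal.{u}) (ν : Cardinal.{u})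
    (g : Ordinal.{u} → Ordinal.{u} → Ordinal.{u}) : Prop :=
  (∀ η, η < ν.ord → InProd ρord lam (g η)) ∧
  (∀ η₁ η₂, η₁ < η₂ → η₂ < ν.ord → EvDomLt ρord (g η₁) (g η₂)) ∧
  ∀ f, InProd ρord lam f → ∃ η, η < ν.ord ∧ EvDomLt ρord f (g η)

/-- `supBelow μ i = sup_{i' < i} μ i'`. -/
noncomputable def supBelow (μ : Ordinal.{u} → Cardinal.{u}) (i : Ordinal.{u}) : Cardinal.{u} :=
  sSup {c | ∃ i', i' < i ∧ c = μ i'}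


section Aux

open Ordinal

lemma almostSub_refl {κ : Cardinal.{u}} (hκ : ℵ₀ ≤ κ) (A : Set Ordinal.{u}) :
    AlmostSub κ A A := by
  refine ⟨0, ?_, by simp⟩
  rw [Cardinal.lt_ord]
  simpa using (Cardinal.aleph0_pos.trans_le hκ)

lemma almostSub_trans {κ : Cardinal.{u}} {A B C : Set Ordinal.{u}}
    (h1 : AlmostSub κ A B) (h2 : AlmostSub κ B C) : AlmostSub κ A C := by
  obtain ⟨β₁, hβ₁, hAB⟩ := h1
  obtain ⟨β₂, hβ₂, hBC⟩ := h2
  refine ⟨max β₁ β₂, max_lt hβ₁ hβ₂, fun x hx => ?_⟩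
  rcases em (x ∈ B) with hB | hB
  · exact Set.mem_Iio.2 ((Set.mem_Iio.1 (hBC ⟨hB, hx.2⟩)).trans_le (le_max_right _ _))
  · exact Set.mem_Iio.2 ((Set.mem_Iio.1 (hAB ⟨hx.1, hB⟩)).trans_le (le_max_left _ _))

/-- A subset of `Iio κ.ord` of full size `κ` is unbounded in `κ.ord`, for `κ` regular
(in fact any infinite `κ`). -/
lemma exists_gt_of_big {κ : Cardinal.{u}} (hκ : ℵ₀ ≤ κ) (T : Set Ordinal.{u})
    (hT : T ⊆ Set.Iio κ.ord) (hmk : Cardinal.lift.{u + 1, u} κ ≤ #T)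
    {β : Ordinal.{u}} (hβ : β < κ.ord) : ∃ x ∈ T, β < x := by
  by_contra hcon
  push_neg at hcon
  have hsub : T ⊆ Set.Iio (β + 1) := fun x hx => by
    have := hcon x hx
    exact Set.mem_Iio.2 (Order.lt_add_one_iff.2 this)
  have h1 : #T ≤ Cardinal.lift.{u + 1} (β + 1).card :=
    (Cardinal.mk_le_mk_of_subset hsub).trans_eq (Ordinal.mk_Iio_ordinal _)
  have h2 : (β + 1 : Ordinal) < κ.ord := by
    rw [Ordinal.add_one_eq_succ]
    exact (Cardinal.isSuccLimit_ord hκ).succ_lt hβ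
  have h3 : (β + 1).card < κ := Cardinal.lt_ord.1 h2
  exact absurd (hmk.trans h1) (not_le.2 (Cardinal.lift_lt.2 h3))

-- Transfinite recursion picking, at each stage `ξ`, a pair of distinct elements of `S ξ`
-- above all previously picked elements (if possible; otherwise `(0,0)`).
open Classical in
noncomputable def pickPair (S : Ordinal.{u} → Set Ordinal.{u}) (ξ : Ordinal.{u}) :
    Ordinal.{u} × Ordinal.{u} :=
  if hp : ∃ q : Ordinal.{u} × Ordinal.{u}, q.1 ∈ S ξ ∧ q.2 ∈ S ξ ∧ q.1 ≠ q.2 ∧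
      ∀ ζ (_ : ζ < ξ), max (pickPair S ζ).1 (pickPair S ζ).2 < min q.1 q.2
  then hp.choose else (0, 0)
termination_by ξ
decreasing_by all_goals assumption

/-- The "good" property of the pick at stage `ξ`. -/
def GoodAt (S : Ordinal.{u} → Set Ordinal.{u}) (ξ : Ordinal.{u}) : Prop :=
  (pickPair S ξ).1 ∈ S ξ ∧ (pickPair S ξ).2 ∈ S ξ ∧ (pickPair S ξ).1 ≠ (pickPair S ξ).2 ∧
  ∀ ζ (_ : ζ < ξ), max (pickPair S ζ).1 (pickPair S ζ).2 <
    min (pickPair S ξ).1 (pickPair S ξ).2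

lemma pickPair_spec (S : Ordinal.{u} → Set Ordinal.{u}) (ξ : Ordinal.{u})
    (hp : ∃ q : Ordinal.{u} × Ordinal.{u}, q.1 ∈ S ξ ∧ q.2 ∈ S ξ ∧ q.1 ≠ q.2 ∧
      ∀ ζ (_ : ζ < ξ), max (pickPair S ζ).1 (pickPair S ζ).2 < min q.1 q.2) :
    GoodAt S ξ := by
  have heq : pickPair S ξ = hp.choose := by
    rw [pickPair, dif_pos hp]
  obtain ⟨h1, h2, h3, h4⟩ := hp.choose_spec
  exact ⟨heq ▸ h1, heq ▸ h2, heq ▸ h3, fun ζ hζ => heq ▸ h4 ζ hζ⟩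

lemma goodAt_all {κ : Cardinal.{u}} (hκreg : κ.IsRegular) (U : UltrafilterOn κ)
    (hU : U.IsUniform) (S : Ordinal.{u} → Set Ordinal.{u})
    (hS : ∀ ξ, ξ < κ.ord → S ξ ∈ U.sets) :
    ∀ ξ, ξ < κ.ord → GoodAt S ξ := by
  intro ξ
  induction ξ using Ordinal.induction with
  | h ξ IH =>
  intro hξ
  set s : Ordinal.{u} :=
    Ordinal.bsup ξ (fun ζ _ => max (pickPair S ζ).1 (pickPair S ζ).2) with hs
  have hsκ : s < κ.ord := by
    apply Cardinal.bsup_lt_ord_of_isRegular hκreg (Cardinal.lt_ord.1 hξ)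
    intro ζ hζ
    have hg := IH ζ hζ (hζ.trans hξ)
    have hm1 := U.sets_subset _ (hS ζ (hζ.trans hξ)) hg.1
    have hm2 := U.sets_subset _ (hS ζ (hζ.trans hξ)) hg.2.1
    exact max_lt hm1 hm2
  have hSmk : Cardinal.lift.{u + 1, u} κ ≤ #(S ξ) := (hU _ (hS ξ hξ)).ge
  obtain ⟨x, hxS, hsx⟩ := exists_gt_of_big hκreg.aleph0_le (S ξ)
    (U.sets_subset _ (hS ξ hξ)) hSmk hsκ
  have hxκ : x < κ.ord := U.sets_subset _ (hS ξ hξ) hxS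
  obtain ⟨y, hyS, hxy⟩ := exists_gt_of_big hκreg.aleph0_le (S ξ)
    (U.sets_subset _ (hS ξ hξ)) hSmk hxκ
  apply pickPair_spec
  refine ⟨(x, y), hxS, hyS, hxy.ne, fun ζ hζ => ?_⟩
  have h1 : max (pickPair S ζ).1 (pickPair S ζ).2 ≤ s := Ordinal.le_bsup _ ζ hζ
  have h2 : min x y = x := min_eq_left hxy.le
  simpa [h2] using h1.trans_lt hsx

lemma self_le_pick {κ : Cardinal.{u}} (hκreg : κ.IsRegular) (U : UltrafilterOn κ)
    (hU : U.IsUniform) (S : Ordinal.{u} → Set Ordinal.{u})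
    (hS : ∀ ξ, ξ < κ.ord → S ξ ∈ U.sets) :
    ∀ ξ, ξ < κ.ord → ξ ≤ min (pickPair S ξ).1 (pickPair S ξ).2 := by
  intro ξ
  induction ξ using Ordinal.induction with
  | h ξ IH =>
  intro hξ
  by_contra hcon
  push_neg at hcon
  set m := min (pickPair S ξ).1 (pickPair S ξ).2 with hm
  have hgood := goodAt_all hκreg U hU S hS ξ hξ
  have hlt := hgood.2.2.2 m hcon
  have hIH : m ≤ min (pickPair S m).1 (pickPair S m).2 :=
    IH m hcon (hcon.trans hξ)
  have : m ≤ max (pickPair S m).1 (pickPair S m).2 :=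
    hIH.trans (min_le_max)
  exact absurd (this.trans_lt hlt) (lt_irrefl m)

/-- Key splitting lemma: a uniform ultrafilter on a regular uncountable `κ` cannot have a
generating family indexed by an ordinal of cardinality at most `κ`. -/
lemma no_short_base {κ : Cardinal.{u}} (hκreg : κ.IsRegular) (U : UltrafilterOn κ)
    (hU : U.IsUniform) (δord : Ordinal.{u}) (hδ : δord.card ≤ κ)
    (B : Ordinal.{u} → Set Ordinal.{u}) (hmem : ∀ η, η < δord → B η ∈ U.sets)
    (hbase : U.IsBase (B '' Set.Iio δord)) : False := by
  have hκ : ℵ₀ ≤ κ := hκreg.aleph0_le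
  -- δord is nonzero
  obtain ⟨Y, hYim, -⟩ := hbase.2 _ U.univ_mem
  obtain ⟨η₀, hη₀, -⟩ := hYim
  have hδ0 : (0 : Ordinal.{u}) < δord := (show (0 : Ordinal.{u}) ≤ η₀ by simp).trans_lt hη₀
  -- an equiv giving a "pairing" of κ with δord × κ
  have hmkeq : #(↥(Set.Iio κ.ord) : Type (u + 1)) =
      #((↥(Set.Iio δord) × ↥(Set.Iio κ.ord)) : Type (u + 1)) := by
    rw [Cardinal.mk_prod, Cardinal.lift_id, Cardinal.lift_id,
      Ordinal.mk_Iio_ordinal, Ordinal.mk_Iio_ordinal, Cardinal.card_ord]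
    rw [Cardinal.mul_eq_right (Cardinal.aleph0_le_lift.2 hκ)
      (Cardinal.lift_le.2 hδ) ?_]
    simp only [ne_eq, Cardinal.lift_eq_zero, Ordinal.card_eq_zero]
    exact hδ0.ne'
  obtain ⟨e⟩ := Cardinal.eq.1 hmkeq
  set h : Ordinal.{u} → Ordinal.{u} := fun ξ =>
    if hξ : ξ < κ.ord then ((e ⟨ξ, hξ⟩).1 : Ordinal.{u}) else 0 with hh
  have hhδ : ∀ ξ, h ξ < δord := by
    intro ξ
    simp only [hh]
    split
    · exact (e _).1.2
    · exact hδ0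
  set S : Ordinal.{u} → Set Ordinal.{u} := fun ξ => B (h ξ) with hSdef
  have hS : ∀ ξ, ξ < κ.ord → S ξ ∈ U.sets := fun ξ _ => hmem _ (hhδ ξ)
  have hgood := goodAt_all hκreg U hU S hS
  have hmono := self_le_pick hκreg U hU S hS
  -- fibers of h are unbounded
  have hfiber : ∀ η, η < δord → ∀ β, β < κ.ord →
      ∃ ξ, β < ξ ∧ ξ < κ.ord ∧ h ξ = η := by
    intro η hη β hβ
    set T : Set Ordinal.{u} := {ξ | ξ < κ.ord ∧ h ξ = η} with hT
    have hTsub : T ⊆ Set.Iio κ.ord := fun ξ hξ => hξ.1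
    have hmkT : Cardinal.lift.{u + 1, u} κ ≤ #T := by
      have hval : ∀ (z : ↥(Set.Iio κ.ord)), h (z : Ordinal.{u}) = ((e z).1 : Ordinal.{u}) := by
        intro z
        simp only [hh]
        rw [dif_pos (show (z : Ordinal.{u}) < κ.ord from z.2)]
      have hinj : Function.Injective (fun ζ : ↥(Set.Iio κ.ord) =>
          (⟨(e.symm (⟨η, hη⟩, ζ) : ↥(Set.Iio κ.ord)).1, by
            constructor
            · exact (e.symm (⟨η, hη⟩, ζ)).2
            · rw [hval (e.symm (⟨η, hη⟩, ζ)), e.apply_symm_apply]⟩ : ↥T)) := by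
        intro ζ₁ ζ₂ hζ
        have h1 : ((e.symm (⟨η, hη⟩, ζ₁) : ↥(Set.Iio κ.ord)) : Ordinal.{u}) =
            ((e.symm (⟨η, hη⟩, ζ₂) : ↥(Set.Iio κ.ord)) : Ordinal.{u}) := by
          have := congrArg (fun t : ↥T => (t : Ordinal.{u})) hζ
          simpa using this
        have h2 : (e.symm (⟨η, hη⟩, ζ₁) : ↥(Set.Iio κ.ord)) = e.symm (⟨η, hη⟩, ζ₂) :=
          Subtype.ext h1
        have h3 := e.symm.injective h2
        exact (Prod.ext_iff.1 h3).2
      calc Cardinal.lift.{u + 1, u} κ = #(↥(Set.Iio κ.ord)) := by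
            rw [Ordinal.mk_Iio_ordinal, Cardinal.card_ord]
        _ ≤ #T := Cardinal.mk_le_of_injective hinj
    obtain ⟨ξ, hξT, hβξ⟩ := exists_gt_of_big hκ T hTsub hmkT hβ
    exact ⟨ξ, hβξ, hξT.1, hξT.2⟩
  -- the splitting set
  set X : Set Ordinal.{u} := {o | ∃ ξ, ξ < κ.ord ∧ (pickPair S ξ).1 = o} with hX
  have hXsub : X ⊆ Set.Iio κ.ord := by
    rintro o ⟨ξ, hξ, rfl⟩
    exact U.sets_subset _ (hS ξ hξ) (hgood ξ hξ).1
  -- key facts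
  have key : ∀ η, η < δord → ∀ β, β < κ.ord →
      (∃ x, (x ∈ B η ∧ x ∈ X) ∧ β < x) ∧ (∃ y, (y ∈ B η ∧ y ∉ X) ∧ β < y) := by
    intro η hη β hβ
    obtain ⟨ξ, hβξ, hξκ, hξη⟩ := hfiber η hη β hβ
    have hg := hgood ξ hξκ
    have hm := hmono ξ hξκ
    have hB1 : (pickPair S ξ).1 ∈ B η := by rw [← hξη]; exact hg.1
    have hB2 : (pickPair S ξ).2 ∈ B η := by rw [← hξη]; exact hg.2.1
    constructor
    · exact ⟨(pickPair S ξ).1, ⟨hB1, ⟨ξ, hξκ, rfl⟩⟩,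
        hβξ.trans_le (hm.trans (min_le_left _ _))⟩
    · refine ⟨(pickPair S ξ).2, ⟨hB2, ?_⟩,
        hβξ.trans_le (hm.trans (min_le_right _ _))⟩
      rintro ⟨ξ', hξ'κ, heq⟩
      rcases lt_trichotomy ξ' ξ with hlt | heqξ | hgt
      · have := hg.2.2.2 ξ' hlt
        have h1 : (pickPair S ξ).2 ≤ max (pickPair S ξ').1 (pickPair S ξ').2 :=
          heq ▸ le_max_left _ _
        exact absurd ((h1.trans_lt this).trans_le (min_le_right _ _)) (lt_irrefl _)
      · subst heqξ
        exact hg.2.2.1 heq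
      · have := (hgood ξ' hξ'κ).2.2.2 ξ hgt
        have h1 : min (pickPair S ξ').1 (pickPair S ξ').2 ≤ (pickPair S ξ).2 :=
          heq ▸ min_le_left _ _
        exact absurd ((this.trans_le h1).trans_le (le_max_right _ _)) (lt_irrefl _)
  -- split on whether X ∈ U
  rcases U.mem_or_compl_mem X hXsub with hXmem | hXc
  · obtain ⟨Y, hYim, hYsub⟩ := hbase.2 X hXmem
    obtain ⟨η, hη, rfl⟩ := hYim
    obtain ⟨β, hβ, hsub⟩ := hYsub
    obtain ⟨-, ⟨y, ⟨hyB, hyX⟩, hβy⟩⟩ := key η hη β hβ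
    exact absurd (hsub ⟨hyB, hyX⟩) (not_lt.2 hβy.le)
  · obtain ⟨Y, hYim, hYsub⟩ := hbase.2 _ hXc
    obtain ⟨η, hη, rfl⟩ := hYim
    obtain ⟨β, hβ, hsub⟩ := hYsub
    obtain ⟨⟨x, ⟨hxB, hxX⟩, hβx⟩, -⟩ := key η hη β hβ
    have hx : x ∈ B η \ (Set.Iio κ.ord \ X) := ⟨hxB, fun hc => hc.2 hxX⟩
    exact absurd (hsub hx) (not_lt.2 hβx.le)

end Aux

/-- a uniform ultrafilter on a regular uncountable cardinal `κ` with an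
almost-decreasing generating sequence has one whose length is a regular cardinal `θ > κ`. -/
theorem statement4 (κ : Cardinal.{u}) (hκreg : κ.IsRegular) (hκunc : ℵ₀ < κ)
    (U : UltrafilterOn κ) (hU : U.IsUniform)
    (h : ∃ (θord : Ordinal.{u}) (A : Ordinal.{u} → Set Ordinal.{u}), U.IsADGenSeq θord A) :
    ∃ (θ : Cardinal.{u}) (A : Ordinal.{u} → Set Ordinal.{u}),
      θ.IsRegular ∧ κ < θ ∧ U.IsADGenSeq θ.ord A := by
  obtain ⟨θord, A, hmem, hdec, hbase⟩ := h
  have hκ : ℵ₀ ≤ κ := hκreg.aleph0_le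
  obtain ⟨f, hf⟩ := Ordinal.exists_fundamental_sequence θord
  set B : Ordinal.{u} → Set Ordinal.{u} := fun η =>
    if hη : η < θord.cof.ord then A (f η hη) else ∅ with hB
  have hfmem : ∀ η (hη : η < θord.cof.ord), f η hη < θord := fun η hη => hf.lt hη
  have hBmem : ∀ η, η < θord.cof.ord → B η ∈ U.sets := by
    intro η hη
    simp only [hB, dif_pos hη]
    exact hmem _ (hfmem η hη)
  have hBdec : ∀ η₁ η₂, η₁ ≤ η₂ → η₂ < θord.cof.ord → AlmostSub κ (B η₂) (B η₁) := by
    intro η₁ η₂ hle hη₂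
    have hη₁ : η₁ < θord.cof.ord := hle.trans_lt hη₂
    have hfle : f η₁ hη₁ ≤ f η₂ hη₂ := by
      rcases hle.lt_or_eq with hlt | heq
      · exact (hf.strict_mono hη₁ hη₂ hlt).le
      · subst heq; rfl
    simp only [hB, dif_pos hη₁, dif_pos hη₂]
    exact hdec _ _ hfle (hfmem η₂ hη₂)
  have hBbase : U.IsBase (B '' Set.Iio θord.cof.ord) := by
    constructor
    · rintro Y ⟨η, hη, rfl⟩
      exact hBmem η hη
    · intro X hX
      obtain ⟨Y, hYim, hYsub⟩ := hbase.2 X hX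
      obtain ⟨j, hj, rfl⟩ := hYim
      have hjb : j < Ordinal.blsub θord.cof.ord f := by rw [hf.blsub_eq]; exact hj
      obtain ⟨η, hη, hjle⟩ := Ordinal.lt_blsub_iff.1 hjb
      refine ⟨B η, ⟨η, hη, rfl⟩, ?_⟩
      have h1 : AlmostSub κ (A (f η hη)) (A j) := hdec j _ hjle (hfmem η hη)
      have h2 : B η = A (f η hη) := by simp only [hB, dif_pos hη]
      rw [h2]
      exact almostSub_trans h1 hYsub
  have hκc : κ < θord.cof := by
    by_contra hcon
    push_neg at hcon
    exact no_short_base hκreg U hU θord.cof.ord (by rw [Cardinal.card_ord]; exact hcon)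
      B hBmem hBbase
  have hreg : θord.cof.IsRegular := by
    rcases Ordinal.zero_or_succ_or_isSuccLimit θord with h0 | ⟨o, ho⟩ | hlim
    · exfalso
      obtain ⟨Y, hYim, -⟩ := hbase.2 _ U.univ_mem
      obtain ⟨j, hj, -⟩ := hYim
      rw [h0] at hj
      exact absurd hj (not_lt_zero (a := j))
    · exfalso
      have : θord.cof = 1 := by rw [← ho, Ordinal.cof_succ]
      rw [this] at hκc
      exact absurd (hκc.trans_le (le_of_eq rfl)) (not_lt.2 (Cardinal.one_le_aleph0.trans hκ))
    · exact Cardinal.isRegular_cof hlim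
  exact ⟨θord.cof, B, hreg, hκc, hBmem, hBdec, hBbase⟩
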